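/- Let 𝔨 be a finite-dimensional real Lie algebra equipped with a (positive definite) inner product ⟨·,·⟩ such that ad(X) is skew-symmetric for every X ∈ 𝔨, i.e. ⟨[X,Y],Z⟩ = −⟨Y,[X,Z]⟩ for all X, Y, Z ∈ 𝔨. Then every solvable Lie subalgebra of 𝔨 is abelian. -/

import Mathlib

/-- Every solvable Lie subalgebra of a finite-dimensional real Lie algebra carrying an
inner product (a positive definite symmetric bilinear form) for which every `ad X` is
skew-symmetric (i.e. a compact Lie algebra) is abelian. -/
theorem solvable_subalgebra_of_compact_isAbelian
    (K : Type*) [LieRing K] [LieAlgebra ℝ K] [FiniteDimensional ℝ K]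
    (ip : K →ₗ[ℝ] K →ₗ[ℝ] ℝ)
    (hsymm : ∀ X Y : K, ip X Y = ip Y X)
    (hpos : ∀ X : K, X ≠ 0 → 0 < ip X X)
    (hskew : ∀ X Y Z : K, ip ⁅X, Y⁆ Z = -ip Y ⁅X, Z⁆)
    (S : LieSubalgebra ℝ K) (hS : LieAlgebra.IsSolvable S) :
    IsLieAbelian S := by
  classical
  -- positive definiteness in the subalgebra
  have hdef : ∀ x : S, ip x x = 0 → x = 0 := by
    intro x hx
    by_contra h
    have hx' : (x : K) ≠ 0 := fun hc => h (ZeroMemClass.coe_eq_zero.mp hc)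
    exact (hpos _ hx').ne' hx
  have hnn : ∀ x : S, (0 : ℝ) ≤ ip x x := by
    intro x
    rcases eq_or_ne ((x : K)) 0 with h | h
    · rw [h]; simp
    · exact (hpos _ h).le
  -- inner product space structure on ↥S
  let core : InnerProductSpace.Core ℝ S :=
  { inner := fun x y => ip x y
    conj_inner_symm := fun x y => by simpa using hsymm y x
    re_inner_nonneg := fun x => by simpa using hnn x
    definite := hdef
    add_left := fun x y z => by simp
    smul_left := fun x y r => by
      have h1 : ((r • x : S) : K) = r • (x : K) := rfl
      simp [h1]
  }
  letI : NormedAddCommGroup S := core.toNormedAddCommGroup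
  letI : InnerProductSpace ℝ S := InnerProductSpace.ofCore core.toCore
  have hinner : ∀ x y : S, (inner ℝ x y : ℝ) = ip x y := fun _ _ => rfl
  have hds : ∀ n : ℕ, LieAlgebra.derivedSeries ℝ S (n + 1)
      = ⁅LieAlgebra.derivedSeries ℝ S n, LieAlgebra.derivedSeries ℝ S n⁆ :=
    fun n => LieAlgebra.derivedSeriesOfIdeal_succ ℝ S ⊤ n
  -- the first derived series term, as a submodule
  set D1 : LieIdeal ℝ S := LieAlgebra.derivedSeries ℝ S 1 with hD1
  have hD1eq : D1 = ⁅(⊤ : LieIdeal ℝ S), (⊤ : LieIdeal ℝ S)⁆ := hds 0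
  set W : Submodule ℝ S := (D1 : Submodule ℝ S) with hW
  -- elements orthogonal to the derived algebra are central
  have hcent : ∀ z : S, z ∈ Wᗮ → ∀ y : S, ⁅z, y⁆ = 0 := by
    intro z hz y
    set a : S := ⁅z, y⁆ with ha
    have hmem : (⁅y, a⁆ : S) ∈ D1 := by
      rw [hD1eq]
      exact LieSubmodule.lie_mem_lie (LieSubmodule.mem_top _) (LieSubmodule.mem_top _)
    have hzero : ip (z : K) ((⁅y, a⁆ : S) : K) = 0 := by
      have := (Submodule.mem_orthogonal W z).mp hz (⁅y, a⁆ : S) hmem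
      rw [hinner] at this
      rw [hsymm]
      exact this
    have key : ip ((a : S) : K) ((a : S) : K) = 0 := by
      have h1 : ip ((⁅y, z⁆ : S) : K) ((a : S) : K) = -ip (z : K) ((⁅y, a⁆ : S) : K) :=
        hskew (y : K) (z : K) ((a : S) : K)
      have h2 : ((⁅y, z⁆ : S) : K) = -((a : S) : K) := by
        have h3 : (⁅y, z⁆ : S) = -a := by rw [ha, ← lie_skew]
        simpa using congrArg Subtype.val h3
      rw [h2] at h1
      simp only [map_neg, LinearMap.neg_apply] at h1
      rw [hzero] at h1
      simpa using h1
    exact hdef a key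
  -- D1 is contained in the second derived series term
  have hstep : D1 ≤ LieAlgebra.derivedSeries ℝ S 2 := by
    rw [hD1eq, LieSubmodule.lieIdeal_oper_eq_span, LieSubmodule.lieSpan_le]
    rintro m ⟨⟨x, -⟩, ⟨y, -⟩, rfl⟩
    have hsup : ∀ v : S, v ∈ W ⊔ Wᗮ := by
      intro v
      rw [Submodule.sup_orthogonal_of_hasOrthogonalProjection]
      trivial
    obtain ⟨d, hd, z, hz, hx⟩ := Submodule.mem_sup.mp (hsup x)
    obtain ⟨e, he, w, hw, hy⟩ := Submodule.mem_sup.mp (hsup y)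
    have hzc := hcent z hz
    have hwc := hcent w hw
    have hbr : ⁅x, y⁆ = ⁅d, e⁆ := by
      rw [← hx, ← hy]
      have h1 : ⁅d, w⁆ = 0 := by rw [← lie_skew, hwc d, neg_zero]
      have h2 : ⁅z, e⁆ = 0 := hzc e
      have h3 : ⁅z, w⁆ = 0 := hzc w
      rw [add_lie, lie_add, lie_add, h1, h2, h3]
      simp
    rw [hbr, hds 1, ← hD1]
    exact LieSubmodule.lie_mem_lie hd he
  -- D1 is contained in every later term of the derived series
  have hall : ∀ n : ℕ, D1 ≤ LieAlgebra.derivedSeries ℝ S (n + 1) := by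
    intro n
    induction n with
    | zero => exact le_rfl
    | succ n ih =>
      refine hstep.trans ?_
      rw [hds 1, ← hD1, hds (n + 1)]
      exact LieSubmodule.mono_lie ih ih
  obtain ⟨k, hk⟩ := (LieAlgebra.isSolvable_iff ℝ S).mp hS
  have hbot : D1 = ⊥ := by
    have h1 : LieAlgebra.derivedSeries ℝ S (k + 1) = ⊥ := by
      rw [hds k, hk]
      exact LieSubmodule.lie_bot _
    exact le_bot_iff.mp (h1 ▸ hall k)
  constructor
  intro x y
  have hm : (⁅x, y⁆ : S) ∈ D1 := by
    rw [hD1eq]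
    exact LieSubmodule.lie_mem_lie (LieSubmodule.mem_top _) (LieSubmodule.mem_top _)
  rw [hbot] at hm
  simpa using hm
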